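/- Every word over a 3-letter alphabet of length at least 39 contains a factor of exponent at least 7/4. (In particular, there are only finitely many ternary words all of whose nonempty factors have exponent strictly less than 7/4.) -/

import Mathlib

def HasPeriod {A : Type*} (w : List A) (p : ℕ) : Prop :=
  1 ≤ p ∧ ∀ i, i + p < w.length → w[i]? = w[i + p]?

noncomputable def period {A : Type*} (w : List A) : ℕ :=
  sInf {p | HasPeriod w p}

noncomputable def exponent {A : Type*} (w : List A) : ℚ :=
  (w.length : ℚ) / (period w : ℚ)

/-- `w` is a finite factor of the infinite word `f`. -/
def FactorOf {A : Type*} (w : List A) (f : ℕ → A) : Prop :=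
  ∃ i, w = (List.range w.length).map (fun k => f (i + k))

/-! ### Auxiliary computable search -/

def fceil (p : ℕ) : ℕ := (7*p+3)/4

def chkN (x n p : ℕ) : Bool :=
  decide (fceil p ≤ n) &&
  decide (x % 4^(fceil p - p) = (x / 4^p) % 4^(fceil p - p))

def okN (x n : ℕ) : Bool :=
  (List.range' 1 n).all (fun p => !(chkN x n p))

def extN (x n : ℕ) : ℕ → Bool
  | 0 => true
  | k+1 => [0,1,2].any (fun a => okN (4*x+a) (n+1) && extN (4*x+a) (n+1) k)

set_option maxRecDepth 100000 in
set_option maxHeartbeats 4000000 in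
theorem extN_false : extN 0 0 39 = false := by decide

/-- base-4 encoding of a word, head = least significant digit -/
def encw : List (Fin 3) → ℕ
  | [] => 0
  | a :: v => 4 * encw v + a.val

lemma digit_mod_eq {x y m i : ℕ} (h : x % 4^m = y % 4^m) (hi : i < m) :
    x / 4^i % 4 = y / 4^i % 4 := by
  have key : ∀ z : ℕ, z / 4^i % 4 = (z % 4^m) / 4^i % 4 := by
    intro z
    conv_lhs => rw [← Nat.div_add_mod z (4^m)]
    have e1 : 4 ^ m * (z / 4 ^ m) + z % 4 ^ m
        = z % 4^m + 4^i * (4 * (4^(m-i-1) * (z / 4^m))) := by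
      have : (4:ℕ) ^ m = 4 ^ i * 4 * 4 ^ (m - i - 1) := by
        rw [← pow_succ, ← pow_add]; congr 1; omega
      rw [this]; ring
    rw [e1, Nat.add_mul_div_left _ _ (by positivity), Nat.add_mul_mod_self_left]
  rw [key x, key y, h]

lemma encw_digit : ∀ (v : List (Fin 3)) (i : ℕ) (h : i < v.length),
    encw v / 4^i % 4 = (v[i]'h).val := by
  intro v
  induction v with
  | nil => intro i h; simp at h
  | cons a v ih =>
    intro i h
    cases i with
    | zero =>
      simp only [encw, pow_zero, Nat.div_one, List.getElem_cons_zero]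
      rw [Nat.mul_add_mod]
      exact Nat.mod_eq_of_lt (lt_trans a.isLt (by norm_num))
    | succ i =>
      have h' : i < v.length := by simpa using h
      simp only [encw, List.getElem_cons_succ]
      rw [pow_succ', ← Nat.div_div_eq_div_mul]
      have : (4 * encw v + (a:ℕ)) / 4 = encw v := by
        rw [Nat.mul_add_div (by norm_num), Nat.div_eq_of_lt (lt_trans a.isLt (by norm_num))]
        omega
      rw [this]; exact ih i h'

lemma hasPeriod_reverse {A : Type*} {l : List A} {p : ℕ} (h : HasPeriod l p) :
    HasPeriod l.reverse p := by
  obtain ⟨hp, hper⟩ := h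
  refine ⟨hp, fun i hi => ?_⟩
  rw [List.length_reverse] at hi
  have h1 : i < l.length := by omega
  rw [List.getElem?_reverse h1,
    List.getElem?_reverse hi]
  have := hper (l.length - 1 - (i+p)) (by omega)
  have e : l.length - 1 - (i + p) + p = l.length - 1 - i := by omega
  rw [e] at this
  exact this.symm

lemma exponent_ge {A : Type*} {v : List A} {p : ℕ} (h : HasPeriod v p)
    (hl : 7*p ≤ 4*v.length) : 7/4 ≤ exponent v := by
  have hmem := Nat.sInf_mem (⟨p, h⟩ : {q | HasPeriod v q}.Nonempty)
  have h1 : 1 ≤ period v := hmem.1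
  have h2 : period v ≤ p := Nat.sInf_le h
  have hq : (0:ℚ) < (period v : ℚ) := by exact_mod_cast h1
  unfold exponent
  rw [div_le_div_iff₀ (by norm_num) hq]
  have : (7 * (period v) : ℚ) ≤ 4 * v.length := by
    exact_mod_cast le_trans (Nat.mul_le_mul_left 7 h2) hl
  linarith

/-- soundness of `chkN`: it detects a genuine periodic window. -/
lemma chkN_sound {u : List (Fin 3)} {p : ℕ} (hp : 1 ≤ p)
    (h : chkN (encw u) u.length p = true) :
    fceil p ≤ u.length ∧ HasPeriod (u.take (fceil p)) p := by
  rw [chkN, Bool.and_eq_true, decide_eq_true_iff, decide_eq_true_iff] at h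
  obtain ⟨hL, hmod⟩ := h
  set L := fceil p with hLdef
  refine ⟨hL, hp, ?_⟩
  intro i hi
  rw [List.length_take] at hi
  have hiL : i + p < L := by omega
  have h1 : i < u.length := by omega
  have h2 : i + p < u.length := by omega
  have d1 : encw u / 4^i % 4 = encw u / 4^p / 4^i % 4 :=
    digit_mod_eq hmod (by omega)
  rw [Nat.div_div_eq_div_mul, ← pow_add] at d1
  have e1 := encw_digit u i h1
  have e2 := encw_digit u (p + i) (by omega)
  rw [e1, e2] at d1
  have : u[i]'h1 = u[p+i]'(by omega) := Fin.ext d1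
  rw [List.getElem?_take, List.getElem?_take, if_pos (by omega : i < L),
    if_pos (by omega : i + p < L)]
  rw [List.getElem?_eq_getElem h1, List.getElem?_eq_getElem h2]
  have : u[i]'h1 = u[i+p]'h2 := by rw [this]; congr 1; omega
  rw [this]

/-- If every step along `r` starting from `v` passes `okN`, the search succeeds. -/
lemma extN_of : ∀ (r v : List (Fin 3)),
    (∀ k < r.length, okN (encw ((r.take (k+1)).reverse ++ v))
        ((r.take (k+1)).reverse ++ v).length = true) →
    extN (encw v) v.length r.length = true := by
  intro r
  induction r with
  | nil => intro v _; rfl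
  | cons a r ih =>
    intro v hyp
    have hok : okN (encw (a :: v)) (a :: v).length = true := by
      have := hyp 0 (by simp)
      simpa using this
    have hext : extN (encw (a :: v)) (a :: v).length r.length = true := by
      apply ih
      intro k hk
      have := hyp (k+1) (by simpa using Nat.succ_lt_succ hk)
      simpa [List.take_succ_cons, List.reverse_cons, List.append_assoc] using this
    show extN (encw v) v.length (r.length + 1) = true
    rw [extN, List.any_eq_true]
    refine ⟨(a : ℕ), ?_, ?_⟩
    · have := a.isLt
      interval_cases h : (a : ℕ) <;> simp
    · rw [Bool.and_eq_true]
      constructor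
      · have e : 4 * encw v + (a:ℕ) = encw (a :: v) := rfl
        rw [e]; exact hok
      · have e : 4 * encw v + (a:ℕ) = encw (a :: v) := rfl
        rw [e]; exact hext

theorem stmt3 (w : List (Fin 3)) (h : 39 ≤ w.length) :
    ∃ v : List (Fin 3), v ≠ [] ∧ v <:+: w ∧ 7/4 ≤ exponent v := by
  by_contra hcon
  push_neg at hcon
  set t : List (Fin 3) := w.take 39 with ht
  have htlen : t.length = 39 := by
    rw [ht, List.length_take]; omega
  have htinf : t <:+: w := (List.take_prefix 39 w).isInfix
  -- every step along t passes okN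
  have key : ∀ k < t.length, okN (encw ((t.take (k+1)).reverse ++ []))
      ((t.take (k+1)).reverse ++ []).length = true := by
    intro k hk
    set u : List (Fin 3) := (t.take (k+1)).reverse ++ [] with hu
    by_contra hne
    have hfail : ¬ (∀ p ∈ List.range' 1 u.length, (!(chkN (encw u) u.length p)) = true) := by
      intro hall
      exact hne (List.all_eq_true.2 hall)
    push_neg at hfail
    obtain ⟨p, hpmem, hchk⟩ := hfail
    have hchk' : chkN (encw u) u.length p = true := by
      simpa using hchk
    have hp1 : 1 ≤ p := by
      rw [List.mem_range'_1] at hpmem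
      exact hpmem.1
    obtain ⟨hL, hper⟩ := chkN_sound hp1 hchk'
    set L := fceil p with hLdef
    set v0 : List (Fin 3) := (u.take L).reverse with hv0
    have hv0len : v0.length = L := by
      rw [hv0, List.length_reverse, List.length_take]; omega
    have hLpos : 1 ≤ L := by
      rw [hLdef]; unfold fceil; omega
    have hv0ne : v0 ≠ [] := by
      intro hnil
      rw [hnil] at hv0len
      simp at hv0len; omega
    have hv0per : HasPeriod v0 p := hasPeriod_reverse hper
    have hv0inf : v0 <:+: w := by
      have h1 : v0.reverse <+: (t.take (k+1)).reverse := by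
        rw [hv0, List.reverse_reverse]
        have : u = (t.take (k+1)).reverse := by rw [hu, List.append_nil]
        rw [this]
        exact List.take_prefix L _
      have h2 : v0 <:+ t.take (k+1) := by
        rw [← List.reverse_prefix]; exact h1
      have h3 : v0 <:+: t := h2.isInfix.trans (List.take_prefix (k+1) t).isInfix
      exact h3.trans htinf
    have hexp : 7/4 ≤ exponent v0 := by
      apply exponent_ge hv0per
      rw [hv0len, hLdef]
      unfold fceil; omega
    exact absurd hexp (not_le.2 (hcon v0 hv0ne hv0inf))
  have := extN_of t [] key
  rw [htlen] at this
  have : extN 0 0 39 = true := this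
  rw [extN_false] at this
  exact Bool.false_ne_true this
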